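/- Let N = n² with n ≥ 1, m ≥ 1, (n,m) ≠ (1,1), q = N/(N+m−1), and let Z be the number of edges of the support of a uniformly random bipartite multigraph from B'(n,m). Then Var[Z] = (mq/(N+m−2)) · (N−1)(1−q). -/

import Mathlib

open scoped Classical

/-- The finite set `B'(n,m)` of all bipartite multigraphs on the vertex set of the
complete bipartite graph `K_{n,n}` with total edge multiplicity `m`: a multigraph is
a multiplicity function on the `n²` possible edges, which we encode as the pairs
`(i,j)` (the edge joining left-vertex `i` to right-vertex `j`). -/
def multigraphs (n m : ℕ) : Finset (Fin n × Fin n → ℕ) :=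
  (Fintype.piFinset fun _ : Fin n × Fin n => Finset.range (m + 1)).filter
    fun f => ∑ e, f e = m

/-- The number of edges of the support of a multigraph, i.e. the number of edges
with positive multiplicity. -/
def suppSize {n : ℕ} (f : Fin n × Fin n → ℕ) : ℕ :=
  (Finset.univ.filter fun e => 0 < f e).card

/-- The `k`-th moment of the support size. -/
noncomputable def momentSuppSize (n m k : ℕ) : ℝ :=
  (∑ f ∈ multigraphs n m, (suppSize f : ℝ) ^ k) / ((multigraphs n m).card : ℝ)

lemma card_piAntidiag_univ (α : Type*) [Fintype α] [DecidableEq α] (n : ℕ) :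
    (Finset.piAntidiag (Finset.univ : Finset α) n).card = Nat.multichoose (Fintype.card α) n := by
  rw [← Finset.map_sym_eq_piAntidiag, Finset.card_map, Finset.sym_univ, Finset.card_univ,
    Sym.card_sym_eq_multichoose]

lemma card_piAntidiag {ι : Type*} [Fintype ι] [DecidableEq ι] (s : Finset ι) (n : ℕ) :
    (Finset.piAntidiag s n).card = Nat.multichoose s.card n := by
  have h := card_piAntidiag_univ (↥s) n
  rw [Fintype.card_coe] at h
  rw [← h]
  apply Finset.card_nbij' (i := fun f (x : ↥s) => f x)
    (j := fun g i => if h : i ∈ s then g ⟨i, h⟩ else 0)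
  · intro f hf
    rw [Finset.mem_coe, Finset.mem_piAntidiag] at hf ⊢
    refine ⟨?_, fun i _ => Finset.mem_univ i⟩
    rw [← hf.1, ← Finset.sum_coe_sort s f]
  · intro g hg
    rw [Finset.mem_coe, Finset.mem_piAntidiag] at hg ⊢
    constructor
    · rw [Finset.sum_dite_of_true (fun i h => h)]
      simpa using hg.1
    · intro i hi
      by_contra h
      simp [h] at hi
  · intro f hf
    rw [Finset.mem_coe, Finset.mem_piAntidiag] at hf
    funext i
    by_cases h : i ∈ s
    · simp [h]
    · simp only [h, dif_neg, not_false_iff]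
      by_contra h'
      exact h (hf.2 i (Ne.symm h'))
  · intro g hg
    funext x
    simp [x.2]

lemma multigraphs_filter_eq (n m : ℕ) (S : Finset (Fin n × Fin n)) :
    (multigraphs n m).filter (fun f => ∀ e ∈ S, f e = 0) = Finset.piAntidiag Sᶜ m := by
  ext f
  simp only [multigraphs, Finset.mem_filter, Fintype.mem_piFinset, Finset.mem_range,
    Finset.mem_piAntidiag, Finset.mem_compl]
  constructor
  · rintro ⟨⟨hb, hs⟩, hz⟩
    refine ⟨?_, fun i hi his => hi (hz i his)⟩
    rw [← hs]
    exact Finset.sum_subset (Finset.subset_univ Sᶜ) (by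
      intro x _ hx
      exact hz x (by simpa using hx))
  · rintro ⟨hs, hsupp⟩
    have hz : ∀ e ∈ S, f e = 0 := fun e he => by
      by_contra h
      exact (hsupp e h) he
    have htot : ∑ e, f e = m := by
      rw [← hs]
      exact (Finset.sum_subset (Finset.subset_univ Sᶜ) (by
        intro x _ hx
        exact hz x (by simp at hx; exact hx))).symm
    refine ⟨⟨fun e => ?_, htot⟩, hz⟩
    have : f e ≤ m := htot ▸ Finset.single_le_sum (fun i _ => Nat.zero_le _) (Finset.mem_univ e)
    omega

lemma multichoose_ratio (b m : ℕ) :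
    Nat.multichoose (b + 1) m * b = Nat.multichoose b m * (b + m) := by
  cases b with
  | zero =>
    cases m with
    | zero => simp
    | succ k => simp [Nat.multichoose_zero_succ]
  | succ c =>
    rw [Nat.multichoose_eq, Nat.multichoose_eq]
    have h1 : (c + 1 + 1 + m - 1) = c + m + 1 := by omega
    have h2 : (c + 1 + m - 1) = c + m := by omega
    rw [h1, h2, ← Nat.choose_symm (by omega : m ≤ c + m + 1),
      ← Nat.choose_symm (by omega : m ≤ c + m)]
    have h3 : c + m + 1 - m = c + 1 := by omega
    have h4 : c + m - m = c := by omega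
    rw [h3, h4]
    rw [← Nat.add_one_mul_choose_eq (c + m) c]
    ring

lemma card_multigraphs (n m : ℕ) : (multigraphs n m).card = Nat.multichoose (n * n) m := by
  have h : (multigraphs n m).filter (fun f => ∀ e ∈ (∅ : Finset (Fin n × Fin n)), f e = 0)
      = multigraphs n m := by
    apply Finset.filter_true_of_mem
    simp
  rw [← h, multigraphs_filter_eq, card_piAntidiag]
  simp

lemma count0 (n m : ℕ) (e : Fin n × Fin n) :
    ((multigraphs n m).filter fun f => f e = 0).card = Nat.multichoose (n * n - 1) m := by
  have h : ((multigraphs n m).filter fun f => f e = 0)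
      = (multigraphs n m).filter (fun f => ∀ x ∈ ({e} : Finset (Fin n × Fin n)), f x = 0) := by
    apply Finset.filter_congr
    intro f _
    simp
  rw [h, multigraphs_filter_eq, card_piAntidiag, Finset.card_compl]
  simp

lemma count00 (n m : ℕ) {e e' : Fin n × Fin n} (h : e ≠ e') :
    ((multigraphs n m).filter fun f => f e = 0 ∧ f e' = 0).card
      = Nat.multichoose (n * n - 2) m := by
  have h2 : ((multigraphs n m).filter fun f => f e = 0 ∧ f e' = 0)
      = (multigraphs n m).filter (fun f => ∀ x ∈ ({e, e'} : Finset (Fin n × Fin n)), f x = 0) := by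
    apply Finset.filter_congr
    intro f _
    simp only [Finset.mem_insert, Finset.mem_singleton]
    constructor
    · rintro ⟨h1, h2⟩ x (rfl | rfl) <;> assumption
    · intro hx
      exact ⟨hx e (Or.inl rfl), hx e' (Or.inr rfl)⟩
  rw [h2, multigraphs_filter_eq, card_piAntidiag, Finset.card_compl,
    Finset.card_insert_of_notMem (by simpa using h), Finset.card_singleton]
  simp

lemma suppSize_cast {n : ℕ} (f : Fin n × Fin n → ℕ) :
    (suppSize f : ℝ) = ∑ e, (1 - if f e = 0 then (1 : ℝ) else 0) := by
  rw [suppSize, Finset.card_filter]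
  push_cast
  refine Finset.sum_congr rfl fun e _ => ?_
  by_cases h : f e = 0 <;> simp [h, Nat.pos_iff_ne_zero]

lemma sum_indicator (n m : ℕ) (e : Fin n × Fin n) :
    ∑ f ∈ multigraphs n m, (if f e = 0 then (1 : ℝ) else 0)
      = (((multigraphs n m).filter fun f => f e = 0).card : ℝ) := by
  rw [Finset.sum_boole]

lemma sum_indicator2 (n m : ℕ) (e e' : Fin n × Fin n) :
    ∑ f ∈ multigraphs n m,
        ((if f e = 0 then (1 : ℝ) else 0) * (if f e' = 0 then (1 : ℝ) else 0))
      = (((multigraphs n m).filter fun f => f e = 0 ∧ f e' = 0).card : ℝ) := by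
  rw [← Finset.sum_boole]
  refine Finset.sum_congr rfl fun f _ => ?_
  by_cases h1 : f e = 0 <;> by_cases h2 : f e' = 0 <;> simp [h1, h2]

lemma sum1 (n m : ℕ) (D : ℕ)
    (hD : ∀ e : Fin n × Fin n, ((multigraphs n m).filter fun f => f e = 0).card = D) :
    ∑ f ∈ multigraphs n m, (suppSize f : ℝ)
      = (n * n : ℝ) * (((multigraphs n m).card : ℝ) - D) := by
  calc ∑ f ∈ multigraphs n m, (suppSize f : ℝ)
      = ∑ f ∈ multigraphs n m, ∑ e, (1 - if f e = 0 then (1 : ℝ) else 0) :=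
        Finset.sum_congr rfl fun f _ => suppSize_cast f
    _ = ∑ e : Fin n × Fin n, ∑ f ∈ multigraphs n m, (1 - if f e = 0 then (1 : ℝ) else 0) :=
        Finset.sum_comm
    _ = ∑ e : Fin n × Fin n, (((multigraphs n m).card : ℝ) - D) := by
        refine Finset.sum_congr rfl fun e _ => ?_
        rw [Finset.sum_sub_distrib, Finset.sum_const, sum_indicator, hD e,
          nsmul_eq_mul, mul_one]
    _ = (n * n : ℝ) * (((multigraphs n m).card : ℝ) - D) := by
        rw [Finset.sum_const, Finset.card_univ, nsmul_eq_mul]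
        simp

lemma sum2 (n m : ℕ) (D E : ℕ)
    (hD : ∀ e : Fin n × Fin n, ((multigraphs n m).filter fun f => f e = 0).card = D)
    (hDE : ∀ e e' : Fin n × Fin n,
      (((multigraphs n m).filter fun f => f e = 0 ∧ f e' = 0).card : ℝ)
        = if e = e' then (D : ℝ) else (E : ℝ)) :
    ∑ f ∈ multigraphs n m, (suppSize f : ℝ) ^ 2
      = (n * n : ℝ) * ((n * n : ℝ) * (((multigraphs n m).card : ℝ) - 2 * D)
          + (n * n : ℝ) * E + (D : ℝ) - E) := by
  set G := multigraphs n m with hG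
  set C : ℝ := (G.card : ℝ) with hC
  calc ∑ f ∈ G, (suppSize f : ℝ) ^ 2
      = ∑ f ∈ G, ∑ e : Fin n × Fin n, ∑ e' : Fin n × Fin n,
          ((1 - if f e = 0 then (1 : ℝ) else 0) * (1 - if f e' = 0 then (1 : ℝ) else 0)) := by
        refine Finset.sum_congr rfl fun f _ => ?_
        rw [sq, suppSize_cast, Finset.sum_mul_sum]
    _ = ∑ e : Fin n × Fin n, ∑ e' : Fin n × Fin n, ∑ f ∈ G,
          ((1 - if f e = 0 then (1 : ℝ) else 0) * (1 - if f e' = 0 then (1 : ℝ) else 0)) := by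
        rw [Finset.sum_comm]
        exact Finset.sum_congr rfl fun e _ => Finset.sum_comm
    _ = ∑ e : Fin n × Fin n, ∑ e' : Fin n × Fin n,
          (C - D - D + (if e = e' then (D : ℝ) else (E : ℝ))) := by
        refine Finset.sum_congr rfl fun e _ => Finset.sum_congr rfl fun e' _ => ?_
        have expand : ∀ a b : ℝ, (1 - a) * (1 - b) = 1 - a - b + a * b := by intros; ring
        simp_rw [expand]
        rw [Finset.sum_add_distrib, Finset.sum_sub_distrib, Finset.sum_sub_distrib,
          Finset.sum_const, sum_indicator, sum_indicator, sum_indicator2, hD e, hD e',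
          hDE e e', nsmul_eq_mul, mul_one]
    _ = ∑ e : Fin n × Fin n, ((n * n : ℝ) * (C - D - D) + ((n * n : ℝ) * E + ((D : ℝ) - E))) := by
        refine Finset.sum_congr rfl fun e _ => ?_
        rw [Finset.sum_add_distrib, Finset.sum_const, Finset.card_univ]
        have : ∑ e' : Fin n × Fin n, (if e = e' then (D : ℝ) else (E : ℝ))
            = (n * n : ℝ) * E + ((D : ℝ) - E) := by
          have : ∀ e' : Fin n × Fin n, (if e = e' then (D : ℝ) else (E : ℝ))
              = (E : ℝ) + (if e = e' then (D : ℝ) - E else 0) := by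
            intro e'; by_cases h : e = e' <;> simp [h]
          simp_rw [this]
          rw [Finset.sum_add_distrib, Finset.sum_const, Finset.sum_ite_eq, Finset.card_univ]
          simp [mul_comm]
        rw [this, nsmul_eq_mul]
        simp [mul_comm]
    _ = (n * n : ℝ) * ((n * n : ℝ) * (C - 2 * D) + (n * n : ℝ) * E + (D : ℝ) - E) := by
        rw [Finset.sum_const, Finset.card_univ, nsmul_eq_mul]
        simp only [Fintype.card_prod, Fintype.card_fin]
        push_cast
        ring

set_option maxHeartbeats 1600000 in
/-- The variance of the support size of a uniformly random bipartite multigraph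
from `B'(n,m)` is `(mq/(N+m−2))·(N−1)(1−q)`, where `N = n²`, `q = N/(N+m−1)`,
provided `n ≥ 1`, `m ≥ 1` and `(n,m) ≠ (1,1)`. -/
theorem variance_suppSize (n m : ℕ) (hn : 1 ≤ n) (hm : 1 ≤ m) (hnm : ¬(n = 1 ∧ m = 1)) :
    momentSuppSize n m 2 - (momentSuppSize n m 1) ^ 2 =
      ((m : ℝ) * ((n : ℝ) ^ 2 / ((n : ℝ) ^ 2 + (m : ℝ) - 1)) /
          ((n : ℝ) ^ 2 + (m : ℝ) - 2)) *
        (((n : ℝ) ^ 2 - 1) * (1 - (n : ℝ) ^ 2 / ((n : ℝ) ^ 2 + (m : ℝ) - 1))) := by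
  classical
  have hN1 : 1 ≤ n * n := Nat.one_le_iff_ne_zero.mpr (by positivity)
  set C := Nat.multichoose (n * n) m with hCdef
  set D := Nat.multichoose (n * n - 1) m with hDdef
  set E := Nat.multichoose (n * n - 2) m with hEdef
  have hcard : (multigraphs n m).card = C := card_multigraphs n m
  have hD : ∀ e : Fin n × Fin n, ((multigraphs n m).filter fun f => f e = 0).card = D :=
    fun e => count0 n m e
  have hDE : ∀ e e' : Fin n × Fin n,
      (((multigraphs n m).filter fun f => f e = 0 ∧ f e' = 0).card : ℝ)
        = if e = e' then (D : ℝ) else (E : ℝ) := by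
    intro e e'
    by_cases h : e = e'
    · subst h
      rw [if_pos rfl]
      norm_cast
      rw [← hD e]
      congr 1
      apply Finset.filter_congr
      intro f _
      simp
    · rw [if_neg h]
      norm_cast
      exact count00 n m h
  have hS1 := sum1 n m D hD
  have hS2 := sum2 n m D E hD hDE
  rw [momentSuppSize, momentSuppSize]
  simp only [pow_one]
  rw [hS1, hS2, hcard]
  -- now pure algebra
  have hx : ((n : ℝ) * n) = (n : ℝ) ^ 2 := (sq (n : ℝ)).symm
  -- real-number facts
  have hCpos : (0 : ℝ) < (C : ℝ) := by
    have : 0 < C := by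
      rw [hCdef, Nat.multichoose_eq]
      exact Nat.choose_pos (by omega)
    exact_mod_cast this
  have hC0 : (C : ℝ) ≠ 0 := ne_of_gt hCpos
  have h1 : (n : ℝ) ^ 2 + (m : ℝ) - 1 ≠ 0 := by
    have h1' : (1 : ℝ) ≤ (n : ℝ) ^ 2 := by
      have : (1 : ℝ) ≤ (n : ℝ) := by exact_mod_cast hn
      nlinarith
    have hm' : (1 : ℝ) ≤ (m : ℝ) := by exact_mod_cast hm
    nlinarith
  have h2 : (n : ℝ) ^ 2 + (m : ℝ) - 2 ≠ 0 := by
    have : (3 : ℕ) ≤ n * n + m := by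
      rcases Nat.lt_or_ge n 2 with h | h
      · have hne : m ≠ 1 := fun h' => hnm ⟨by omega, h'⟩
        have : n = 1 := by omega
        subst this
        omega
      · nlinarith
    have h3 : (3 : ℝ) ≤ (n : ℝ) * n + m := by exact_mod_cast this
    nlinarith
  have hDC : (D : ℝ) * ((n : ℝ) ^ 2 + (m : ℝ) - 1) = (C : ℝ) * ((n : ℝ) ^ 2 - 1) := by
    have key := multichoose_ratio (n * n - 1) m
    rw [Nat.sub_add_cancel hN1] at key
    have key' := congrArg (Nat.cast : ℕ → ℝ) key
    push_cast [Nat.cast_sub hN1] at key'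
    -- key' : C * (n*n - 1) = D * (n*n - 1 + m)
    rw [← hx]
    linarith [key']
  have hED : (E : ℝ) * ((n : ℝ) ^ 2 + (m : ℝ) - 2) = (D : ℝ) * ((n : ℝ) ^ 2 - 2) := by
    rcases Nat.lt_or_ge n 2 with h | h
    · -- n = 1
      have hn1 : n = 1 := by omega
      subst hn1
      have hm2 : 2 ≤ m := by omega
      have hD0 : D = 0 := by
        rw [hDdef]
        obtain ⟨k, rfl⟩ : ∃ k, m = k + 1 := ⟨m - 1, by omega⟩
        simp [Nat.multichoose_zero_succ]
      have hE0 : E = 0 := by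
        rw [hEdef]
        obtain ⟨k, rfl⟩ : ∃ k, m = k + 1 := ⟨m - 1, by omega⟩
        simp [Nat.multichoose_zero_succ]
      rw [hD0, hE0]
      simp
    · have hN2 : 2 ≤ n * n := by nlinarith
      have key := multichoose_ratio (n * n - 2) m
      have hsub : n * n - 2 + 1 = n * n - 1 := by omega
      rw [hsub] at key
      have key' := congrArg (Nat.cast : ℕ → ℝ) key
      push_cast [Nat.cast_sub hN2, Nat.cast_sub hN1] at key'
      rw [← hx]
      linarith [key']
  -- substitute closed forms for D and E
  have hd : (D : ℝ) = (C : ℝ) * ((n : ℝ) ^ 2 - 1) / ((n : ℝ) ^ 2 + (m : ℝ) - 1) := by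
    field_simp
    linarith [hDC]
  have he : (E : ℝ) = (D : ℝ) * ((n : ℝ) ^ 2 - 2) / ((n : ℝ) ^ 2 + (m : ℝ) - 2) := by
    field_simp
    linarith [hED]
  have hev : (E : ℝ) = (C : ℝ) * ((n : ℝ) ^ 2 - 1) * ((n : ℝ) ^ 2 - 2) /
      (((n : ℝ) ^ 2 + (m : ℝ) - 1) * ((n : ℝ) ^ 2 + (m : ℝ) - 2)) := by
    rw [he, hd]
    field_simp
  rw [hev, hd]
  field_simp
  ring
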